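/- Under exponentially decreasing incidence λ(s) = λ·exp(ρ(t−s)) with λ, ρ > 0 and constant prevalence p ∈ (0,1), the equation ∫_{t−c}^{T} (λ(s)(1−p)/p) ds = e, where c is defined by the same integral over [t−c, t] equaling 1, has solution T = t − log(1 + ρ·p·(1−e)/((1−p)·λ))/ρ for all e ∈ [0,1]. -/

import Mathlib

open MeasureTheory Set intervalIntegral

lemma exp_integral_key (lam ρ p t : ℝ) (hρ : ρ ≠ 0) (hp : p ≠ 0) (a b : ℝ) :
    (∫ s in a..b, lam * Real.exp (ρ * (t - s)) * (1 - p) / p)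
      = (lam * (1 - p) / (p * ρ)) * (Real.exp (ρ * (t - a)) - Real.exp (ρ * (t - b))) := by
  have h : ∀ s : ℝ, HasDerivAt (fun s => -(lam * (1 - p) / (p * ρ)) * Real.exp (ρ * (t - s)))
      (lam * Real.exp (ρ * (t - s)) * (1 - p) / p) s := by
    intro s
    have h1 : HasDerivAt (fun s : ℝ => ρ * (t - s)) (-ρ) s := by
      simpa using (((hasDerivAt_id s).const_sub t).const_mul ρ)
    have h2 := (h1.exp).const_mul (-(lam * (1 - p) / (p * ρ)))
    refine h2.congr_deriv ?_
    field_simp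
  have hcont : Continuous (fun s : ℝ => lam * Real.exp (ρ * (t - s)) * (1 - p) / p) := by
    apply Continuous.div_const
    exact ((continuous_const.mul (Real.continuous_exp.comp
      (continuous_const.mul (continuous_const.sub continuous_id)))).mul continuous_const)
  rw [intervalIntegral.integral_eq_sub_of_hasDerivAt (fun s _ => h s)
    (hcont.intervalIntegrable a b)]
  ring

/-- Exponentially decreasing incidence: closed-form infection time solving the
simulation integral equation. -/
theorem exponential_incidence_simulation (lam ρ p t c : ℝ)
    (hlam : 0 < lam) (hρ : 0 < ρ) (hp : 0 < p) (hp1 : p < 1) (hcpos : 0 < c)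
    (hc : (lam / ρ) * (Real.exp (ρ * c) - 1) = p / (1 - p)) :
    ∀ e ∈ Icc (0:ℝ) 1,
      (∫ s in (t - c)..(t - Real.log (1 + ρ * p * (1 - e) / ((1 - p) * lam)) / ρ),
        lam * Real.exp (ρ * (t - s)) * (1 - p) / p) = e := by
  intro e he
  have hp1' : (0:ℝ) < 1 - p := by linarith
  have hX : 0 ≤ ρ * p * (1 - e) / ((1 - p) * lam) := by
    apply div_nonneg
    · exact mul_nonneg (mul_nonneg hρ.le hp.le) (by linarith [he.2])
    · positivity
  have hXpos : 0 < 1 + ρ * p * (1 - e) / ((1 - p) * lam) := by linarith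
  rw [exp_integral_key lam ρ p t hρ.ne' hp.ne']
  have h1 : t - (t - c) = c := by ring
  have h2 : t - (t - Real.log (1 + ρ * p * (1 - e) / ((1 - p) * lam)) / ρ)
      = Real.log (1 + ρ * p * (1 - e) / ((1 - p) * lam)) / ρ := by ring
  rw [h1, h2, mul_div_cancel₀ _ hρ.ne', Real.exp_log hXpos]
  -- from hc: exp (ρ*c) = 1 + ρ*p/(lam*(1-p))
  have hec : Real.exp (ρ * c) = 1 + ρ * p / (lam * (1 - p)) := by
    field_simp at hc ⊢
    nlinarith [hc]
  rw [hec]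
  field_simp
  ring
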